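/- Let f_i(ρ_{-i}) = Σ_{j∈J_i} D_i / (B·J_i·log(1 + h_{ij}/(Σ_{ℓ≠i} ρ_ℓ γ_{ℓj} + N))) where D_i > 0, B > 0, J_i is the (positive) number of users in cell i, h_{ij} > 0, γ_{ℓj} ≥ 0, N > 0, and ρ_{-i} is a nonnegative vector of cell loads. Then f_i is a standard interference function: it is positive, monotone in ρ_{-i}, and satisfies α·f_i(ρ_{-i}) > f_i(α·ρ_{-i}) for all α > 1. -/

import Mathlib

theorem stmt_19 {n : ℕ} (J : ℕ) (hJ : 0 < J) (D B N : ℝ)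
    (hD : 0 < D) (hB : 0 < B) (hN : 0 < N)
    (h : Fin J → ℝ) (hh : ∀ j, 0 < h j)
    (γ : Fin n → Fin J → ℝ) (hγ : ∀ ℓ j, 0 ≤ γ ℓ j)
    (f : (Fin n → ℝ) → ℝ)
    (hf : ∀ ρ : Fin n → ℝ, f ρ = ∑ j, D / (B * (J : ℝ) *
      Real.log (1 + h j / ((∑ ℓ, ρ ℓ * γ ℓ j) + N)))) :
    (∀ ρ : Fin n → ℝ, (∀ ℓ, 0 ≤ ρ ℓ) → 0 < f ρ) ∧
    (∀ ρ ρ' : Fin n → ℝ, (∀ ℓ, 0 ≤ ρ ℓ) → (∀ ℓ, ρ ℓ ≤ ρ' ℓ) → f ρ ≤ f ρ') ∧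
    (∀ ρ : Fin n → ℝ, (∀ ℓ, 0 ≤ ρ ℓ) → ∀ α : ℝ, 1 < α →
      f (fun ℓ => α * ρ ℓ) < α * f ρ) := by
  have hBJ : (0:ℝ) < B * (J : ℝ) := by positivity
  -- nonnegativity of interference sums
  have hS : ∀ (ρ : Fin n → ℝ), (∀ ℓ, 0 ≤ ρ ℓ) → ∀ j, 0 ≤ ∑ ℓ, ρ ℓ * γ ℓ j := by
    intro ρ hρ j
    exact Finset.sum_nonneg fun ℓ _ => mul_nonneg (hρ ℓ) (hγ ℓ j)
  -- log positivity
  have hlog : ∀ (S : ℝ), 0 ≤ S → ∀ j, 0 < Real.log (1 + h j / (S + N)) := by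
    intro S hSn j
    have hSN : 0 < S + N := by linarith
    have : (1:ℝ) < 1 + h j / (S + N) := by
      have : 0 < h j / (S + N) := div_pos (hh j) hSN
      linarith
    exact Real.log_pos this
  refine ⟨?_, ?_, ?_⟩
  · intro ρ hρ
    rw [hf]
    refine Finset.sum_pos (fun j _ => ?_) ⟨⟨0, hJ⟩, Finset.mem_univ _⟩
    exact div_pos hD (mul_pos hBJ (hlog _ (hS ρ hρ j) j))
  · intro ρ ρ' hρ hle
    rw [hf, hf]
    refine Finset.sum_le_sum fun j _ => ?_
    have hρ' : ∀ ℓ, 0 ≤ ρ' ℓ := fun ℓ => le_trans (hρ ℓ) (hle ℓ)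
    have hSle : (∑ ℓ, ρ ℓ * γ ℓ j) ≤ ∑ ℓ, ρ' ℓ * γ ℓ j :=
      Finset.sum_le_sum fun ℓ _ => mul_le_mul_of_nonneg_right (hle ℓ) (hγ ℓ j)
    set S := ∑ ℓ, ρ ℓ * γ ℓ j
    set S' := ∑ ℓ, ρ' ℓ * γ ℓ j
    have hS0 : 0 ≤ S := hS ρ hρ j
    have hS'0 : 0 ≤ S' := hS ρ' hρ' j
    have hSN : (0:ℝ) < S + N := by linarith
    have hS'N : (0:ℝ) < S' + N := by linarith
    have hdivle : h j / (S' + N) ≤ h j / (S + N) :=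
      div_le_div_of_nonneg_left (hh j).le hSN (by linarith)
    have hlogle : Real.log (1 + h j / (S' + N)) ≤ Real.log (1 + h j / (S + N)) := by
      have := div_pos (hh j) hS'N
      apply Real.log_le_log (by linarith) (by linarith)
    exact div_le_div_of_nonneg_left hD.le
      (mul_pos hBJ (hlog S' hS'0 j)) (mul_le_mul_of_nonneg_left hlogle hBJ.le)
  · intro ρ hρ α hα
    have hα0 : (0:ℝ) < α := by linarith
    rw [hf, hf, Finset.mul_sum]
    refine Finset.sum_lt_sum_of_nonempty ⟨⟨0, hJ⟩, Finset.mem_univ _⟩ fun j _ => ?_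
    have hSα : (∑ ℓ, α * ρ ℓ * γ ℓ j) = α * ∑ ℓ, ρ ℓ * γ ℓ j := by
      rw [Finset.mul_sum]; exact Finset.sum_congr rfl fun ℓ _ => by ring
    rw [hSα]
    set S := ∑ ℓ, ρ ℓ * γ ℓ j with hSdef
    have hS0 : 0 ≤ S := hS ρ hρ j
    have hSN : (0:ℝ) < S + N := by linarith
    have hαS : (0:ℝ) ≤ α * S := by positivity
    set L := Real.log (1 + h j / (S + N)) with hLdef
    set Lα := Real.log (1 + h j / (α * S + N)) with hLαdef
    have hL : 0 < L := hlog S hS0 j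
    have hLα : 0 < Lα := hlog (α * S) hαS j
    -- key: L < α * Lα
    have key : L < α * Lα := by
      set y := h j / (α * (S + N)) with hydef
      have hy : 0 < y := div_pos (hh j) (mul_pos hα0 hSN)
      -- Bernoulli: 1 + α * y ≤ (1 + y) ^ α
      have hbern : 1 + α * y ≤ (1 + y) ^ α :=
        one_add_mul_self_le_rpow_one_add (by linarith) hα.le
      have hαy : α * y = h j / (S + N) := by
        rw [hydef]; field_simp
      have step1 : L ≤ α * Real.log (1 + y) := by
        calc L = Real.log (1 + α * y) := by rw [hαy]
        _ ≤ Real.log ((1 + y) ^ α) := Real.log_le_log (by nlinarith) hbern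
        _ = α * Real.log (1 + y) := Real.log_rpow (by linarith) α
      have step2 : Real.log (1 + y) < Lα := by
        apply Real.log_lt_log (by linarith)
        have h1 : α * S + N < α * (S + N) := by nlinarith
        have : y < h j / (α * S + N) :=
          div_lt_div_of_pos_left (hh j) (by positivity) h1
        linarith
      calc L ≤ α * Real.log (1 + y) := step1
      _ < α * Lα := by exact mul_lt_mul_of_pos_left step2 hα0
    -- conclude
    rw [div_lt_iff₀ (by positivity)]
    have : α * (D / (B * ↑J * L)) * (B * ↑J * Lα)
        = (D / (B * ↑J * L)) * (B * ↑J) * (α * Lα) := by ring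
    rw [this]
    have hD' : D = (D / (B * ↑J * L)) * (B * ↑J) * L := by
      field_simp
    nth_rewrite 1 [hD']
    apply mul_lt_mul_of_pos_left key
    positivity
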